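/- Let β : ℝ → ℝ be a monotone nondecreasing continuous function with β(0) = 0, let σ ∈ (0,1), p ≥ 2, and let u ∈ X_{σ0} solve 𝔄_σ u + β(u) = f in X_{σ0}' with f ∈ L^p(Ω) and β(u) ∈ L²(Ω). Then β(u) ∈ L^p(Ω) and ‖β(u)‖_{L^p(Ω)} ≤ ‖f‖_{L^p(Ω)}. -/

import Mathlib

open MeasureTheory
open scoped ENNReal

noncomputable def hpow (p : ℝ) (b : ℝ) : ℝ := |b| ^ (p - 2) * b

lemma hpow_zero (p : ℝ) : hpow p 0 = 0 := by simp [hpow]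

lemma hpow_continuous {p : ℝ} (hp : 2 ≤ p) : Continuous (hpow p) := by
  have h1 : Continuous fun b : ℝ => |b| ^ (p - 2) :=
    continuous_abs.rpow_const (fun x => Or.inr (by linarith))
  exact h1.mul continuous_id

lemma hpow_nonneg {p : ℝ} {b : ℝ} (hb : 0 ≤ b) : 0 ≤ hpow p b :=
  mul_nonneg (Real.rpow_nonneg (abs_nonneg b) _) hb

lemma hpow_nonpos {p : ℝ} {b : ℝ} (hb : b ≤ 0) : hpow p b ≤ 0 :=
  mul_nonpos_of_nonneg_of_nonpos (Real.rpow_nonneg (abs_nonneg b) _) hb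

lemma hpow_mono {p : ℝ} (hp : 2 ≤ p) : Monotone (hpow p) := by
  intro b b' hbb
  rcases le_or_gt 0 b with hb | hb
  · have hb' : 0 ≤ b' := hb.trans hbb
    have : |b| ≤ |b'| := by rw [abs_of_nonneg hb, abs_of_nonneg hb']; exact hbb
    exact mul_le_mul (Real.rpow_le_rpow (abs_nonneg b) this (by linarith))
      hbb hb (Real.rpow_nonneg (abs_nonneg b') _)
  · rcases le_or_gt 0 b' with hb' | hb'
    · exact le_trans (hpow_nonpos hb.le) (hpow_nonneg hb')
    · have habs : |b'| ≤ |b| := by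
        rw [abs_of_nonpos hb.le, abs_of_nonpos hb'.le]; linarith
      have : |b'| ^ (p - 2) * (-b') ≤ |b| ^ (p - 2) * (-b) :=
        mul_le_mul (Real.rpow_le_rpow (abs_nonneg b') habs (by linarith))
          (by linarith) (by linarith) (Real.rpow_nonneg (abs_nonneg b) _)
      simp only [hpow]; nlinarith
  
lemma abs_hpow {p : ℝ} (hp : 2 ≤ p) (b : ℝ) : |hpow p b| = |b| ^ (p - 1) := by
  have : p - 1 = (p - 2) + 1 := by ring
  rw [hpow, abs_mul, abs_of_nonneg (Real.rpow_nonneg (abs_nonneg b) _), this,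
    Real.rpow_add_of_nonneg (abs_nonneg b) (by linarith) zero_le_one, Real.rpow_one]

lemma mul_hpow {p : ℝ} (hp : 2 ≤ p) (b : ℝ) : b * hpow p b = |b| ^ p := by
  have h2 : b * b = |b| ^ (2:ℝ) := by
    rw [show ((2:ℝ)) = ((2:ℕ):ℝ) by norm_num, Real.rpow_natCast, sq_abs, sq]
  have hsplit : |b| ^ p = |b| ^ (p-2) * |b| ^ (2:ℝ) := by
    rw [← Real.rpow_add_of_nonneg (abs_nonneg b) (by linarith) (by norm_num)]
    norm_num
  rw [hpow, hsplit, ← h2]; ring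

lemma yosida_exists (g : ℝ → ℝ) (hg : Continuous g) (hm : Monotone g) (hg0 : g 0 = 0)
    {ε : ℝ} (hε : 0 < ε) :
    ∃ J : ℝ → ℝ, (∀ s, J s + ε * g (J s) = s) ∧ Monotone J ∧
      (∀ s t, |J s - J t| ≤ |s - t|) ∧ J 0 = 0 ∧
      (∀ s, 0 ≤ s → 0 ≤ J s ∧ J s ≤ s) ∧ (∀ s, s ≤ 0 → s ≤ J s ∧ J s ≤ 0) ∧
      (∀ s, |s - J s| ≤ ε * |g s|) := by
  set Φ : ℝ → ℝ := fun t => t + ε * g t with hΦ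
  have hΦc : Continuous Φ := continuous_id.add (continuous_const.mul hg)
  have hΦmono : ∀ a b, a ≤ b → Φ a ≤ Φ b := fun a b hab =>
    add_le_add hab (mul_le_mul_of_nonneg_left (hm hab) hε.le)
  have hex : ∀ s : ℝ, ∃ t, Φ t = s := by
    intro s
    have h1 : Φ (min s 0) ≤ s := by
      rcases le_total s 0 with h | h
      · have : min s 0 = s := min_eq_left h
        rw [this]
        have : g s ≤ 0 := hg0 ▸ hm h
        simp only [hΦ]; nlinarith
      · have : min s 0 = 0 := min_eq_right h
        rw [this]; simp only [hΦ, hg0]; simpa using h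
    have h2 : s ≤ Φ (max s 0) := by
      rcases le_total 0 s with h | h
      · have : max s 0 = s := max_eq_left h
        rw [this]
        have : 0 ≤ g s := hg0 ▸ hm h
        simp only [hΦ]; nlinarith
      · have : max s 0 = 0 := max_eq_right h
        rw [this]; simp only [hΦ, hg0]; simpa using h
    have := intermediate_value_Icc (min_le_max.trans (le_refl _)) hΦc.continuousOn
      (a := min s 0) (b := max s 0)
    obtain ⟨t, _, ht⟩ := this ⟨h1, h2⟩
    exact ⟨t, ht⟩
  choose J hJ using hex
  have hmonoJ : Monotone J := by
    intro a b hab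
    by_contra hlt
    push_neg at hlt
    have h1 : g (J b) ≤ g (J a) := hm hlt.le
    have : Φ (J b) < Φ (J a) := by simp only [hΦ]; nlinarith
    rw [hJ, hJ] at this; exact absurd hab (not_le.mpr this)
  have hlip : ∀ s t, |J s - J t| ≤ |s - t| := by
    have key : ∀ s t, t ≤ s → J s - J t ≤ s - t := by
      intro s t hts
      have h1 : J t ≤ J s := hmonoJ hts
      have h2 : g (J t) ≤ g (J s) := hm h1
      have e1 := hJ s; have e2 := hJ t
      simp only [hΦ] at e1 e2; nlinarith
    intro s t
    rcases le_total t s with h | h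
    · rw [abs_of_nonneg (by linarith [sub_nonneg.mpr (hmonoJ h)]),
        abs_of_nonneg (by linarith)]
      exact key s t h
    · rw [abs_of_nonpos (by linarith [sub_nonneg.mpr (hmonoJ h)]),
        abs_of_nonpos (by linarith)]
      linarith [key t s h]
  have hJ0 : J 0 = 0 := by
    have e := hJ 0
    simp only [hΦ] at e
    rcases lt_trichotomy (J 0) 0 with h | h | h
    · have h2 : g (J 0) ≤ g 0 := hm h.le
      rw [hg0] at h2; nlinarith
    · exact h
    · have h2 : g 0 ≤ g (J 0) := hm h.le
      rw [hg0] at h2; nlinarith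
  have hpos : ∀ s, 0 ≤ s → 0 ≤ J s ∧ J s ≤ s := by
    intro s hs
    have h1 : 0 ≤ J s := hJ0 ▸ hmonoJ hs
    have h2 : 0 ≤ g (J s) := hg0 ▸ hm h1
    have e := hJ s; simp only [hΦ] at e
    exact ⟨h1, by nlinarith⟩
  have hneg : ∀ s, s ≤ 0 → s ≤ J s ∧ J s ≤ 0 := by
    intro s hs
    have h1 : J s ≤ 0 := hJ0 ▸ hmonoJ hs
    have h2 : g (J s) ≤ 0 := hg0 ▸ hm h1
    have e := hJ s; simp only [hΦ] at e
    exact ⟨by nlinarith, h1⟩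
  refine ⟨J, fun s => by simpa [hΦ] using hJ s, hmonoJ, hlip, hJ0, hpos, hneg, ?_⟩
  intro s
  rcases le_total 0 s with hs | hs
  · obtain ⟨h1, h2⟩ := hpos s hs
    have h3 : g (J s) ≤ g s := hm h2
    have h4 : 0 ≤ g (J s) := hg0 ▸ hm h1
    have e := hJ s; simp only [hΦ] at e
    rw [abs_of_nonneg (by nlinarith), abs_of_nonneg (by linarith)]
    nlinarith
  · obtain ⟨h1, h2⟩ := hneg s hs
    have h3 : g s ≤ g (J s) := hm h1
    have h4 : g (J s) ≤ 0 := hg0 ▸ hm h2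
    have e := hJ s; simp only [hΦ] at e
    rw [abs_of_nonpos (by nlinarith), abs_of_nonpos (by linarith)]
    nlinarith

lemma integrable_of_lintegral_ofReal {α : Type*} [MeasurableSpace α] {μ : Measure α}
    {h : α → ℝ} (hm : AEStronglyMeasurable h μ) (h0 : ∀ x, 0 ≤ h x)
    (hfin : ∫⁻ x, ENNReal.ofReal (h x) ∂μ < ⊤) : Integrable h μ := by
  refine ⟨hm, ?_⟩
  rw [hasFiniteIntegral_iff_ofReal (Filter.Eventually.of_forall h0)]
  exact hfin

lemma integrable_mul_of_memL2 {α : Type*} [MeasurableSpace α] {μ : Measure α}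
    {f g : α → ℝ} (hf : MemLp f 2 μ) (hg : MemLp g 2 μ) :
    Integrable (fun x => f x * g x) μ := by
  have hf2 : Integrable (fun x => f x ^ 2) μ := (memLp_two_iff_integrable_sq hf.1).mp hf
  have hg2 : Integrable (fun x => g x ^ 2) μ := (memLp_two_iff_integrable_sq hg.1).mp hg
  refine (hf2.add hg2).mono (hf.1.mul hg.1) ?_
  refine Filter.Eventually.of_forall fun x => ?_
  have h1 : ‖f x * g x‖ ≤ f x ^ 2 + g x ^ 2 := by
    rw [Real.norm_eq_abs, abs_mul]
    nlinarith [sq_nonneg (|f x| - |g x|), abs_nonneg (f x), abs_nonneg (g x),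
      sq_abs (f x), sq_abs (g x)]
  refine h1.trans ?_
  rw [Real.norm_eq_abs]
  exact le_abs_self _

lemma u_sq_integrable {N : ℕ} (hN : 0 < N) (Ω : Set (Fin N → ℝ))
    (hΩbdd : Bornology.IsBounded Ω) {e : ℝ} (he : 0 ≤ e)
    {u : (Fin N → ℝ) → ℝ} (hum : Measurable u)
    (hu0 : ∀ᵐ x ∂volume, x ∉ Ω → u x = 0)
    (huX : (∫⁻ x, ∫⁻ y,
        ENNReal.ofReal (|u x - u y| ^ 2 / ‖x - y‖ ^ e) ∂volume ∂volume) < ⊤) :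
    Integrable (fun x => u x ^ 2) (volume.restrict Ω) := by
  haveI : Nonempty (Fin N) := ⟨⟨0, hN⟩⟩
  obtain ⟨R₀, hR₀⟩ := hΩbdd.subset_closedBall 0
  set R : ℝ := max R₀ 1 with hRdef
  have hR1 : (1:ℝ) ≤ R := le_max_right _ _
  have hRpos : (0:ℝ) < R := lt_of_lt_of_le one_pos hR1
  have hΩR : Ω ⊆ Metric.closedBall 0 R :=
    hR₀.trans (Metric.closedBall_subset_closedBall (le_max_left _ _))
  set A : Set (Fin N → ℝ) := Metric.ball 0 (4*R) \ Metric.closedBall 0 (3*R) with hAdef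
  have hAopen : IsOpen A := Metric.isOpen_ball.sdiff Metric.isClosed_closedBall
  have hAne : A.Nonempty := by
    refine ⟨fun _ => (7/2)*R, ?_⟩
    constructor
    · rw [Metric.mem_ball, dist_zero_right, pi_norm_const, Real.norm_eq_abs,
        abs_of_pos (by linarith)]
      linarith
    · rw [Metric.mem_closedBall, dist_zero_right, pi_norm_const, Real.norm_eq_abs,
        abs_of_pos (by linarith)]
      push_neg
      linarith
  have hApos : 0 < volume A := hAopen.measure_pos volume hAne
  have hAfin : volume A < ⊤ :=
    lt_of_le_of_lt (measure_mono Set.diff_subset) measure_ball_lt_top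
  have hu0' : ∀ᵐ y ∂volume, y ∈ A → u y = 0 := by
    filter_upwards [hu0] with y hy hyA
    refine hy fun hyΩ => ?_
    have h1 : ‖y‖ ≤ R := by
      have := hΩR hyΩ
      rwa [Metric.mem_closedBall, dist_zero_right] at this
    have h2 : ¬ dist y 0 ≤ 3*R := hyA.2
    rw [dist_zero_right] at h2
    push_neg at h2
    linarith
  set c : ℝ≥0∞ := ENNReal.ofReal ((5*R) ^ e) with hcdef
  have hc_pos : (0:ℝ) < (5*R) ^ e := Real.rpow_pos_of_pos (by linarith) e
  -- key bound
  have key : ∫⁻ x in Ω, volume A * ENNReal.ofReal (u x ^ 2 / (5*R) ^ e) ∂volume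
      ≤ ∫⁻ x, ∫⁻ y, ENNReal.ofReal (|u x - u y| ^ 2 / ‖x - y‖ ^ e) ∂volume ∂volume := by
    have hinner : ∀ x ∈ Ω,
        volume A * ENNReal.ofReal (u x ^ 2 / (5*R) ^ e)
          ≤ ∫⁻ y, ENNReal.ofReal (|u x - u y| ^ 2 / ‖x - y‖ ^ e) ∂volume := by
      intro x hx
      have hxR : ‖x‖ ≤ R := by
        have := hΩR hx
        rwa [Metric.mem_closedBall, dist_zero_right] at this
      have step : volume A * ENNReal.ofReal (u x ^ 2 / (5*R) ^ e)
          ≤ ∫⁻ y in A, ENNReal.ofReal (|u x - u y| ^ 2 / ‖x - y‖ ^ e) ∂volume := by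
        rw [mul_comm, ← setLIntegral_const A (ENNReal.ofReal (u x ^ 2 / (5*R) ^ e))]
        refine setLIntegral_mono_ae ?_ ?_
        · exact (ENNReal.measurable_ofReal.comp
            (((measurable_const.sub hum).abs.pow_const 2).div
              ((measurable_const.sub measurable_id).norm.pow_const e))).aemeasurable
        · filter_upwards [hu0'] with y hy hyA
          have huy : u y = 0 := hy hyA
          have hy1 : ‖y‖ < 4*R := by
            have := hyA.1
            rwa [Metric.mem_ball, dist_zero_right] at this
          have hy2 : 3*R < ‖y‖ := by
            have h2 := hyA.2
            rw [Metric.mem_closedBall, dist_zero_right] at h2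
            push_neg at h2
            exact h2
          have hxy_le : ‖x - y‖ ≤ 5*R := (norm_sub_le x y).trans (by linarith)
          have hxy_ge : 2*R ≤ ‖x - y‖ := by
            have h3 : ‖y‖ - ‖x‖ ≤ ‖y - x‖ := norm_sub_norm_le y x
            rw [norm_sub_rev y x] at h3
            linarith
          have hd_pos : 0 < ‖x - y‖ ^ e := Real.rpow_pos_of_pos (by linarith) e
          have hd_le : ‖x - y‖ ^ e ≤ (5*R) ^ e :=
        Real.rpow_le_rpow (norm_nonneg _) hxy_le he
          refine ENNReal.ofReal_le_ofReal ?_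
          rw [huy, sub_zero, sq_abs]
          exact div_le_div_of_nonneg_left (sq_nonneg _) hd_pos hd_le
      exact step.trans (setLIntegral_le_lintegral A _)
    calc ∫⁻ x in Ω, volume A * ENNReal.ofReal (u x ^ 2 / (5*R) ^ e) ∂volume
        ≤ ∫⁻ x in Ω, ∫⁻ y, ENNReal.ofReal (|u x - u y| ^ 2 / ‖x - y‖ ^ e) ∂volume ∂volume := by
          refine setLIntegral_mono_ae ?_ (Filter.Eventually.of_forall hinner)
          refine (Measurable.lintegral_prod_right ?_).aemeasurable
          exact ENNReal.measurable_ofReal.comp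
            ((((hum.comp measurable_fst).sub (hum.comp measurable_snd)).abs.pow_const 2).div
              (((measurable_fst.sub measurable_snd)).norm.pow_const e))
      _ ≤ _ := setLIntegral_le_lintegral _ _
  have key2 : volume A * ∫⁻ x in Ω, ENNReal.ofReal (u x ^ 2 / (5*R) ^ e) ∂volume < ⊤ := by
    rw [← lintegral_const_mul' _ _ hAfin.ne]
    exact lt_of_le_of_lt key huX
  have key3 : ∫⁻ x in Ω, ENNReal.ofReal (u x ^ 2 / (5*R) ^ e) ∂volume < ⊤ := by
    by_contra h
    push_neg at h
    rw [top_le_iff.mp h, ENNReal.mul_top hApos.ne'] at key2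
    exact absurd key2 (lt_irrefl _)
  have key4 : ∫⁻ x in Ω, ENNReal.ofReal (u x ^ 2) ∂volume < ⊤ := by
    have heq : ∀ x, ENNReal.ofReal (u x ^ 2)
        = c * ENNReal.ofReal (u x ^ 2 / (5*R) ^ e) := by
      intro x
      rw [hcdef, ← ENNReal.ofReal_mul hc_pos.le]
      congr 1
      field_simp
    simp_rw [heq]
    rw [lintegral_const_mul' _ _ ENNReal.ofReal_ne_top]
    exact ENNReal.mul_lt_top ENNReal.ofReal_lt_top key3
  refine integrable_of_lintegral_ofReal ((hum.pow_const 2).aestronglyMeasurable) 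
    (fun x => sq_nonneg _) key4
set_option maxHeartbeats 1000000 in
theorem beta_Lp_estimate (N : ℕ) (hN : 0 < N) (Ω : Set (Fin N → ℝ))
    (hΩmeas : MeasurableSet Ω) (hΩbdd : Bornology.IsBounded Ω)
    (σ Cσ p : ℝ) (hσ0 : 0 < σ) (hσ1 : σ < 1) (hCσ : 0 < Cσ) (hp : 2 ≤ p)
    (β : ℝ → ℝ) (hβcont : Continuous β) (hβmono : Monotone β) (hβ0 : β 0 = 0)
    (u f : (Fin N → ℝ) → ℝ) (hum : Measurable u) (hfm : Measurable f)
    (hu0 : ∀ᵐ x ∂volume, x ∉ Ω → u x = 0)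
    (huX : (∫⁻ x, ∫⁻ y,
        ENNReal.ofReal (|u x - u y| ^ 2 / ‖x - y‖ ^ ((N : ℝ) + 2 * σ)) ∂volume ∂volume) < ⊤)
    (hfLp : eLpNorm f (ENNReal.ofReal p) (volume.restrict Ω) < ⊤)
    (hβuL2 : eLpNorm (fun x => β (u x)) 2 (volume.restrict Ω) < ⊤)
    (heq : ∀ ζ : (Fin N → ℝ) → ℝ, Measurable ζ →
      (∀ᵐ x ∂volume, x ∉ Ω → ζ x = 0) →
      (∫⁻ x, ∫⁻ y,
        ENNReal.ofReal (|ζ x - ζ y| ^ 2 / ‖x - y‖ ^ ((N : ℝ) + 2 * σ)) ∂volume ∂volume) < ⊤ →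
      Integrable (fun q : (Fin N → ℝ) × (Fin N → ℝ) =>
        (u q.1 - u q.2) * (ζ q.1 - ζ q.2) / ‖q.1 - q.2‖ ^ ((N : ℝ) + 2 * σ))
        (volume.prod volume) →
      Integrable (fun x => β (u x) * ζ x) (volume.restrict Ω) →
      Integrable (fun x => f x * ζ x) (volume.restrict Ω) →
      (Cσ / 2) * (∫ q : (Fin N → ℝ) × (Fin N → ℝ),
          (u q.1 - u q.2) * (ζ q.1 - ζ q.2) / ‖q.1 - q.2‖ ^ ((N : ℝ) + 2 * σ)
          ∂(volume.prod volume))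
        + ∫ x in Ω, β (u x) * ζ x ∂volume
        = ∫ x in Ω, f x * ζ x ∂volume) :
    eLpNorm (fun x => β (u x)) (ENNReal.ofReal p) (volume.restrict Ω)
      ≤ eLpNorm f (ENNReal.ofReal p) (volume.restrict Ω) := by
  haveI : Nonempty (Fin N) := ⟨⟨0, hN⟩⟩
  set μ := volume.restrict Ω with hμdef
  have hp0 : (0:ℝ) < p := by linarith
  have hp1 : (1:ℝ) < p := by linarith
  set q : ℝ := p / (p - 1) with hqdef
  have hpq : p.HolderConjugate q := Real.HolderConjugate.conjExponent hp1
  have hq0 : (0:ℝ) < q := div_pos hp0 (by linarith)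
  have hpq_prod : (p - 1) * q = p := by
    rw [hqdef, mul_comm, div_mul_cancel₀ _ (by linarith : p - 1 ≠ 0)]
  have he0 : (0:ℝ) ≤ (N : ℝ) + 2 * σ := by positivity
  set e : ℝ := (N : ℝ) + 2 * σ with hedef
  haveI : IsFiniteMeasure μ := ⟨by
    rw [hμdef, Measure.restrict_apply_univ]; exact hΩbdd.measure_lt_top⟩
  have hofReal_nn : ∀ r : ℝ, 0 ≤ r → ‖r‖ₑ = ENNReal.ofReal r := fun r hr => by
    rw [Real.enorm_eq_ofReal_abs, abs_of_nonneg hr]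
  -- u, β∘u, f in L²
  have hu_sq : Integrable (fun x => u x ^ 2) μ :=
    u_sq_integrable hN Ω hΩbdd he0 hum hu0 huX
  have huL2 : MemLp u 2 μ :=
    (memLp_two_iff_integrable_sq hum.aestronglyMeasurable).mpr hu_sq
  have hβum : Measurable fun x => β (u x) := hβcont.measurable.comp hum
  have hβuMem : MemLp (fun x => β (u x)) 2 μ := ⟨hβum.aestronglyMeasurable, hβuL2⟩
  have hP0 : ENNReal.ofReal p ≠ 0 := (ENNReal.ofReal_pos.mpr hp0).ne'
  have hPt : ENNReal.ofReal p ≠ ⊤ := ENNReal.ofReal_ne_top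
  have hfMemp : MemLp f (ENNReal.ofReal p) μ := ⟨hfm.aestronglyMeasurable, hfLp⟩
  have hfMem2 : MemLp f 2 μ := hfMemp.mono_exponent (by
    rw [show (2:ℝ≥0∞) = ENNReal.ofReal 2 by norm_num]
    exact ENNReal.ofReal_le_ofReal hp)
  have B1 : Integrable (fun x => |β (u x)| * |u x|) μ := by
    simpa [abs_mul] using (integrable_mul_of_memL2 hβuMem huL2).abs
  have B2 : Integrable (fun x => |f x| * |u x|) μ := by
    simpa [abs_mul] using (integrable_mul_of_memL2 hfMem2 huL2).abs
  -- the Yosida approximations of s ↦ |β s|^(p-2) β s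
  set g : ℝ → ℝ := fun s => hpow p (β s) with hgdef
  have hgcont : Continuous g := (hpow_continuous hp).comp hβcont
  have hgmono : Monotone g := (hpow_mono hp).comp hβmono
  have hg0 : g 0 = 0 := by rw [hgdef]; simp only [hβ0, hpow_zero]
  have hJex : ∀ n : ℕ, ∃ J : ℝ → ℝ,
      (∀ s, J s + (1/((n:ℝ)+1)) * g (J s) = s) ∧ Monotone J ∧
      (∀ s t, |J s - J t| ≤ |s - t|) ∧ J 0 = 0 ∧
      (∀ s, 0 ≤ s → 0 ≤ J s ∧ J s ≤ s) ∧ (∀ s, s ≤ 0 → s ≤ J s ∧ J s ≤ 0) ∧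
      (∀ s, |s - J s| ≤ (1/((n:ℝ)+1)) * |g s|) :=
    fun n => yosida_exists g hgcont hgmono hg0 (by positivity)
  choose J hJeq hJmono hJlip hJ0 hJpos hJneg hJerr using hJex
  have hJcont : ∀ n, Continuous (J n) := by
    intro n
    refine (LipschitzWith.of_dist_le_mul (K := 1) fun s t => ?_).continuous
    rw [Real.dist_eq, Real.dist_eq]
    simpa using hJlip n s t
  have hδ_of : ∀ n s, g (J n s) = ((n:ℝ)+1) * (s - J n s) := by
    intro n s
    have h := hJeq n s
    have hne : ((n:ℝ)+1) ≠ 0 := by positivity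
    field_simp at h ⊢
    linarith
  have hδlip : ∀ n s t, |g (J n s) - g (J n t)| ≤ (2*((n:ℝ)+1)) * |s - t| := by
    intro n s t
    rw [hδ_of n s, hδ_of n t]
    have h1 : ((n:ℝ)+1) * (s - J n s) - ((n:ℝ)+1) * (t - J n t)
        = ((n:ℝ)+1) * ((s - t) - (J n s - J n t)) := by ring
    rw [h1, abs_mul, abs_of_pos (by positivity : (0:ℝ) < (n:ℝ)+1)]
    have h2 : |(s - t) - (J n s - J n t)| ≤ |s - t| + |J n s - J n t| := abs_sub _ _
    have h3 := hJlip n s t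
    nlinarith [abs_nonneg ((s-t) - (J n s - J n t)), (by positivity : (0:ℝ) < (n:ℝ)+1)]
  have hδbound : ∀ n s, |g (J n s)| ≤ (2*((n:ℝ)+1)) * |s| := by
    intro n s
    have := hδlip n s 0
    simpa [hJ0 n, hg0] using this
  have hδmono : ∀ n, Monotone fun s => g (J n s) := fun n => hgmono.comp (hJmono n)
  have hβJ0 : ∀ n s, 0 ≤ s → 0 ≤ β (J n s) ∧ β (J n s) ≤ β s := by
    intro n s hs
    obtain ⟨h1, h2⟩ := hJpos n s hs
    exact ⟨hβ0 ▸ hβmono h1, hβmono h2⟩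
  have hβJ0' : ∀ n s, s ≤ 0 → β s ≤ β (J n s) ∧ β (J n s) ≤ 0 := by
    intro n s hs
    obtain ⟨h1, h2⟩ := hJneg n s hs
    exact ⟨hβmono h1, hβ0 ▸ hβmono h2⟩
  have hvabs : ∀ n s, |β (J n s)| ≤ |β s| := by
    intro n s
    rcases le_total 0 s with hs | hs
    · obtain ⟨h1, h2⟩ := hβJ0 n s hs
      rw [abs_of_nonneg h1, abs_of_nonneg (h1.trans h2)]; exact h2
    · obtain ⟨h1, h2⟩ := hβJ0' n s hs
      rw [abs_of_nonpos h2, abs_of_nonpos (h1.trans' (le_refl _) |>.trans h2)]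
      linarith
  have hvp : ∀ n s, |β (J n s)| ^ p ≤ β s * g (J n s) := by
    intro n s
    have hkey : 0 ≤ (β s - β (J n s)) * hpow p (β (J n s)) := by
      rcases le_total 0 s with hs | hs
      · obtain ⟨h1, h2⟩ := hβJ0 n s hs
        exact mul_nonneg (by linarith) (hpow_nonneg h1)
      · obtain ⟨h1, h2⟩ := hβJ0' n s hs
        have := hpow_nonpos (p := p) h2
        nlinarith
    have := mul_hpow hp (β (J n s))
    simp only [hgdef]
    nlinarith
  have hβζ : ∀ n s, 0 ≤ β s * g (J n s) := by
    intro n s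
    have h := hvp n s
    have h2 : (0:ℝ) ≤ |β (J n s)| ^ p := Real.rpow_nonneg (abs_nonneg _) p
    linarith
  have hζabs_eq : ∀ n s, |g (J n s)| = |β (J n s)| ^ (p - 1) := fun n s => abs_hpow hp _
  have hv_meas : ∀ n, Measurable fun x => β (J n (u x)) :=
    fun n => hβcont.measurable.comp ((hJcont n).measurable.comp hum)
  have hζ_meas : ∀ n, Measurable fun x => g (J n (u x)) :=
    fun n => hgcont.measurable.comp ((hJcont n).measurable.comp hum)
  have hvp_meas : ∀ n, Measurable fun x => |β (J n (u x))| ^ p :=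
    fun n => (continuous_abs.rpow_const fun _ => Or.inr hp0.le).measurable.comp (hv_meas n)
  -- base pair integrability
  have hGmeas : Measurable fun q : (Fin N → ℝ) × (Fin N → ℝ) =>
      |u q.1 - u q.2| ^ 2 / ‖q.1 - q.2‖ ^ e :=
    (((hum.comp measurable_fst).sub (hum.comp measurable_snd)).abs.pow_const 2).div
      ((measurable_fst.sub measurable_snd).norm.pow_const e)
  have hGnonneg : ∀ q : (Fin N → ℝ) × (Fin N → ℝ),
      0 ≤ |u q.1 - u q.2| ^ 2 / ‖q.1 - q.2‖ ^ e :=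
    fun q => div_nonneg (by positivity) (Real.rpow_nonneg (norm_nonneg _) e)
  have hGprod : (∫⁻ z : (Fin N → ℝ) × (Fin N → ℝ),
      ENNReal.ofReal (|u z.1 - u z.2| ^ 2 / ‖z.1 - z.2‖ ^ e) ∂(volume.prod volume)) < ⊤ := by
    rw [← lintegral_lintegral (f := fun x y =>
      ENNReal.ofReal (|u x - u y| ^ 2 / ‖x - y‖ ^ e))
      (ENNReal.measurable_ofReal.comp hGmeas).aemeasurable]
    exact huX
  have hGint : Integrable (fun z : (Fin N → ℝ) × (Fin N → ℝ) =>
      |u z.1 - u z.2| ^ 2 / ‖z.1 - z.2‖ ^ e) (volume.prod volume) :=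
    integrable_of_lintegral_ofReal hGmeas.aestronglyMeasurable hGnonneg hGprod
  -- the real-number quantities
  set Ifp : ℝ := ∫ x, |f x| ^ p ∂μ with hIfpdef
  have hIfint : Integrable (fun x => |f x| ^ p) μ := by
    have := hfMemp.integrable_norm_rpow hP0 hPt
    simpa [Real.norm_eq_abs, ENNReal.toReal_ofReal hp0.le] using this
  have hIfp0 : 0 ≤ Ifp :=
    integral_nonneg fun x => Real.rpow_nonneg (abs_nonneg _) p
  -- main per-n estimate
  have hAle : ∀ n : ℕ, Integrable (fun x => |β (J n (u x))| ^ p) μ ∧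
      (∫ x, |β (J n (u x))| ^ p ∂μ) ≤ Ifp := by
    intro n
    set L : ℝ := 2*((n:ℝ)+1) with hLdef
    have hL0 : (0:ℝ) < L := by positivity
    set ζ : (Fin N → ℝ) → ℝ := fun x => g (J n (u x)) with hζdef
    have hζm : Measurable ζ := hζ_meas n
    have hζabs : ∀ x, |ζ x| ≤ L * |u x| := fun x => hδbound n (u x)
    have Int1 : Integrable (fun x => β (u x) * ζ x) μ := by
      refine (B1.const_mul L).mono (hβum.mul hζm).aestronglyMeasurable
        (Filter.Eventually.of_forall fun x => ?_)
      rw [Real.norm_eq_abs, Real.norm_eq_abs, abs_mul,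
        abs_of_nonneg (by positivity : (0:ℝ) ≤ L * (|β (u x)| * |u x|))]
      calc |β (u x)| * |ζ x| ≤ |β (u x)| * (L * |u x|) :=
            mul_le_mul_of_nonneg_left (hζabs x) (abs_nonneg _)
        _ = L * (|β (u x)| * |u x|) := by ring
    have Int2 : Integrable (fun x => f x * ζ x) μ := by
      refine (B2.const_mul L).mono (hfm.mul hζm).aestronglyMeasurable
        (Filter.Eventually.of_forall fun x => ?_)
      rw [Real.norm_eq_abs, Real.norm_eq_abs, abs_mul,
        abs_of_nonneg (by positivity : (0:ℝ) ≤ L * (|f x| * |u x|))]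
      calc |f x| * |ζ x| ≤ |f x| * (L * |u x|) :=
            mul_le_mul_of_nonneg_left (hζabs x) (abs_nonneg _)
        _ = L * (|f x| * |u x|) := by ring
    have Int3 : Integrable (fun x => |β (J n (u x))| ^ p) μ := by
      refine Int1.mono (hvp_meas n).aestronglyMeasurable
        (Filter.Eventually.of_forall fun x => ?_)
      rw [Real.norm_eq_abs, Real.norm_eq_abs,
        abs_of_nonneg (Real.rpow_nonneg (abs_nonneg _) p)]
      exact (hvp n (u x)).trans (le_abs_self _)
    have Int4 : Integrable (fun z : (Fin N → ℝ) × (Fin N → ℝ) =>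
        (u z.1 - u z.2) * (ζ z.1 - ζ z.2) / ‖z.1 - z.2‖ ^ e) (volume.prod volume) := by
      refine (hGint.const_mul L).mono ?_ (Filter.Eventually.of_forall fun z => ?_)
      · exact ((((hum.comp measurable_fst).sub (hum.comp measurable_snd)).mul
          ((hζm.comp measurable_fst).sub (hζm.comp measurable_snd))).div
          ((measurable_fst.sub measurable_snd).norm.pow_const e)).aestronglyMeasurable
      · rw [Real.norm_eq_abs, Real.norm_eq_abs,
          abs_of_nonneg (by positivity : (0:ℝ) ≤ L * (|u z.1 - u z.2| ^ 2 / ‖z.1 - z.2‖ ^ e)),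
          abs_div, abs_mul, abs_of_nonneg (Real.rpow_nonneg (norm_nonneg _) e)]
        have h1 : |ζ z.1 - ζ z.2| ≤ L * |u z.1 - u z.2| := hδlip n (u z.1) (u z.2)
        have h2 : |u z.1 - u z.2| * |ζ z.1 - ζ z.2| ≤ L * |u z.1 - u z.2| ^ 2 := by
          nlinarith [abs_nonneg (u z.1 - u z.2)]
        rw [div_eq_mul_inv, div_eq_mul_inv, ← mul_assoc]
        exact mul_le_mul_of_nonneg_right h2
          (inv_nonneg.mpr (Real.rpow_nonneg (norm_nonneg _) e))
    have hζ0 : ∀ᵐ x ∂volume, x ∉ Ω → ζ x = 0 := by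
      filter_upwards [hu0] with x hx hxΩ
      rw [hζdef]
      simp only [hx hxΩ, hJ0 n, hg0]
    have hζX : (∫⁻ x, ∫⁻ y,
        ENNReal.ofReal (|ζ x - ζ y| ^ 2 / ‖x - y‖ ^ e) ∂volume ∂volume) < ⊤ := by
      have hbd : ∀ x y : Fin N → ℝ, ENNReal.ofReal (|ζ x - ζ y| ^ 2 / ‖x - y‖ ^ e)
          ≤ ENNReal.ofReal (L^2) * ENNReal.ofReal (|u x - u y| ^ 2 / ‖x - y‖ ^ e) := by
        intro x y
        rw [← ENNReal.ofReal_mul (by positivity)]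
        refine ENNReal.ofReal_le_ofReal ?_
        rw [div_eq_mul_inv, div_eq_mul_inv, ← mul_assoc]
        refine mul_le_mul_of_nonneg_right ?_
          (inv_nonneg.mpr (Real.rpow_nonneg (norm_nonneg _) e))
        have h1 : |ζ x - ζ y| ≤ L * |u x - u y| := hδlip n (u x) (u y)
        nlinarith [abs_nonneg (ζ x - ζ y), abs_nonneg (u x - u y)]
      calc (∫⁻ x, ∫⁻ y, ENNReal.ofReal (|ζ x - ζ y| ^ 2 / ‖x - y‖ ^ e) ∂volume ∂volume)
          ≤ ∫⁻ x, ∫⁻ y, ENNReal.ofReal (L^2) *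
              ENNReal.ofReal (|u x - u y| ^ 2 / ‖x - y‖ ^ e) ∂volume ∂volume :=
            lintegral_mono fun x => lintegral_mono fun y => hbd x y
        _ = ENNReal.ofReal (L^2) * ∫⁻ x, ∫⁻ y,
              ENNReal.ofReal (|u x - u y| ^ 2 / ‖x - y‖ ^ e) ∂volume ∂volume := by
            rw [← lintegral_const_mul' _ _ ENNReal.ofReal_ne_top]
            refine lintegral_congr fun x => ?_
            rw [← lintegral_const_mul' _ _ ENNReal.ofReal_ne_top]
        _ < ⊤ := ENNReal.mul_lt_top ENNReal.ofReal_lt_top huX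
    have hid := heq ζ hζm hζ0 hζX Int4 Int1 Int2
    have hD : 0 ≤ ∫ z : (Fin N → ℝ) × (Fin N → ℝ),
        (u z.1 - u z.2) * (ζ z.1 - ζ z.2) / ‖z.1 - z.2‖ ^ e ∂(volume.prod volume) := by
      refine integral_nonneg fun z => ?_
      refine div_nonneg ?_ (Real.rpow_nonneg (norm_nonneg _) e)
      rcases le_total (u z.1) (u z.2) with h | h
      · have h2 := hδmono n h
        simp only [hζdef]
        nlinarith
      · have h2 := hδmono n h
        simp only [hζdef]
        nlinarith
    have hineq1 : (∫ x, β (u x) * ζ x ∂μ) ≤ ∫ x, f x * ζ x ∂μ := by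
      have h1 : 0 ≤ (Cσ / 2) * ∫ z : (Fin N → ℝ) × (Fin N → ℝ),
          (u z.1 - u z.2) * (ζ z.1 - ζ z.2) / ‖z.1 - z.2‖ ^ e ∂(volume.prod volume) :=
        mul_nonneg (by linarith) hD
      linarith [hid]
    have hineq2 : (∫ x, |β (J n (u x))| ^ p ∂μ) ≤ ∫ x, β (u x) * ζ x ∂μ :=
      integral_mono Int3 Int1 fun x => hvp n (u x)
    -- Hölder
    have IntAbs : Integrable (fun x => |f x| * |ζ x|) μ := by
      simpa [abs_mul] using Int2.abs
    have hineq3 : (∫ x, f x * ζ x ∂μ) ≤ ∫ x, |f x| * |ζ x| ∂μ :=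
      integral_mono Int2 IntAbs fun x => by
        rw [← abs_mul]; exact le_abs_self _
    have hζq_eq : ∀ x, |ζ x| ^ q = |β (J n (u x))| ^ p := by
      intro x
      rw [hζabs_eq n (u x), ← Real.rpow_mul (abs_nonneg _), hpq_prod]
    have hζMemq : MemLp (fun x => |ζ x|) (ENNReal.ofReal q) μ := by
      refine ⟨hζm.abs.aestronglyMeasurable, ?_⟩
      have hQ0 : ENNReal.ofReal q ≠ 0 := (ENNReal.ofReal_pos.mpr hq0).ne'
      rw [eLpNorm_eq_lintegral_rpow_enorm_toReal hQ0 ENNReal.ofReal_ne_top,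
        ENNReal.toReal_ofReal hq0.le]
      refine ENNReal.rpow_lt_top_of_nonneg (by positivity) ?_
      have hlint : (∫⁻ x, ‖|ζ x|‖ₑ ^ q ∂μ)
          = ∫⁻ x, ENNReal.ofReal (|β (J n (u x))| ^ p) ∂μ := by
        refine lintegral_congr fun x => ?_
        rw [hofReal_nn _ (abs_nonneg _),
          ENNReal.ofReal_rpow_of_nonneg (abs_nonneg _) hq0.le, hζq_eq x]
      rw [hlint]
      have := Int3.2
      rw [hasFiniteIntegral_iff_ofReal (Filter.Eventually.of_forall fun x =>
        Real.rpow_nonneg (abs_nonneg _) p)] at this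
      exact this.ne
    have hfabsMem : MemLp (fun x => |f x|) (ENNReal.ofReal p) μ := by
      have := hfMemp.norm
      simpa [Real.norm_eq_abs] using this
    have hHolder := integral_mul_le_Lp_mul_Lq_of_nonneg hpq
      (Filter.Eventually.of_forall fun x => abs_nonneg (f x))
      (Filter.Eventually.of_forall fun x => abs_nonneg (ζ x))
      hfabsMem hζMemq
    have hζq_int : (∫ x, |ζ x| ^ q ∂μ) = ∫ x, |β (J n (u x))| ^ p ∂μ :=
      integral_congr_ae (Filter.Eventually.of_forall fun x => hζq_eq x)
    set A : ℝ := ∫ x, |β (J n (u x))| ^ p ∂μ with hAdef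
    have hA0 : 0 ≤ A := integral_nonneg fun x => Real.rpow_nonneg (abs_nonneg _) p
    have hchain : A ≤ Ifp ^ (1/p) * A ^ (1/q) := by
      calc A ≤ ∫ x, β (u x) * ζ x ∂μ := hineq2
        _ ≤ ∫ x, f x * ζ x ∂μ := hineq1
        _ ≤ ∫ x, |f x| * |ζ x| ∂μ := hineq3
        _ ≤ (∫ x, |f x| ^ p ∂μ) ^ (1/p) * (∫ x, |ζ x| ^ q ∂μ) ^ (1/q) := hHolder
        _ = Ifp ^ (1/p) * A ^ (1/q) := by rw [hζq_int]
    refine ⟨Int3, ?_⟩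
    rcases hA0.eq_or_lt with hA | hA
    · rw [← hA]; exact hIfp0
    · 
      have hsum : 1/p + 1/q = 1 := by
        rw [one_div, one_div]; exact hpq.inv_add_inv_eq_one
      have hstep : A ^ (1/p) ≤ Ifp ^ (1/p) := by
        have h1 : A ^ (1/p) * A ^ (1/q) ≤ Ifp ^ (1/p) * A ^ (1/q) := by
          rw [← Real.rpow_add hA, hsum, Real.rpow_one]
          exact hchain
        exact le_of_mul_le_mul_right h1 (Real.rpow_pos_of_pos hA _)
      calc A = (A ^ (1/p)) ^ p := by
            rw [← Real.rpow_mul hA0, one_div, inv_mul_cancel₀ hp0.ne', Real.rpow_one]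
        _ ≤ (Ifp ^ (1/p)) ^ p := Real.rpow_le_rpow (Real.rpow_nonneg hA0 _) hstep hp0.le
        _ = Ifp := by
            rw [← Real.rpow_mul hIfp0, one_div, inv_mul_cancel₀ hp0.ne', Real.rpow_one]
  -- pointwise convergence and Fatou's lemma
  have hJtend : ∀ s : ℝ, Filter.Tendsto (fun n => J n s) Filter.atTop (nhds s) := by
    intro s
    rw [tendsto_iff_dist_tendsto_zero]
    have hb : Filter.Tendsto (fun n : ℕ => (1/((n:ℝ)+1)) * |g s|) Filter.atTop (nhds 0) := by
      simpa using tendsto_one_div_add_atTop_nhds_zero_nat.mul_const |g s|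
    refine squeeze_zero (fun n => dist_nonneg) (fun n => ?_) hb
    rw [Real.dist_eq, abs_sub_comm]
    exact hJerr n s
  have hvtend : ∀ x, Filter.Tendsto (fun n => ENNReal.ofReal (|β (J n (u x))| ^ p))
      Filter.atTop (nhds (ENNReal.ofReal (|β (u x)| ^ p))) := by
    intro x
    refine (ENNReal.continuous_ofReal.tendsto _).comp ?_
    refine ((continuous_abs.rpow_const fun _ => Or.inr hp0.le).tendsto _).comp ?_
    exact (hβcont.tendsto _).comp (hJtend (u x))
  have hFat : (∫⁻ x, ENNReal.ofReal (|β (u x)| ^ p) ∂μ) ≤ ENNReal.ofReal Ifp := by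
    have h1 : (∫⁻ x, ENNReal.ofReal (|β (u x)| ^ p) ∂μ)
        = ∫⁻ x, Filter.liminf (fun n => ENNReal.ofReal (|β (J n (u x))| ^ p))
            Filter.atTop ∂μ :=
      lintegral_congr fun x => ((hvtend x).liminf_eq).symm
    rw [h1]
    refine le_trans (lintegral_liminf_le fun n =>
      ENNReal.measurable_ofReal.comp (hvp_meas n)) ?_
    have h2 : ∀ n : ℕ, (∫⁻ x, ENNReal.ofReal (|β (J n (u x))| ^ p) ∂μ)
        ≤ ENNReal.ofReal Ifp := by
      intro n
      obtain ⟨hint, hle⟩ := hAle n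
      rw [← ofReal_integral_eq_lintegral_ofReal hint
        (Filter.Eventually.of_forall fun x => Real.rpow_nonneg (abs_nonneg _) p)]
      exact ENNReal.ofReal_le_ofReal hle
    calc Filter.liminf (fun n => ∫⁻ x, ENNReal.ofReal (|β (J n (u x))| ^ p) ∂μ)
          Filter.atTop
        ≤ Filter.liminf (fun _ : ℕ => ENNReal.ofReal Ifp) Filter.atTop :=
          Filter.liminf_le_liminf (Filter.Eventually.of_forall h2)
      _ = ENNReal.ofReal Ifp := Filter.liminf_const _
  -- conclusion
  rw [eLpNorm_eq_lintegral_rpow_enorm_toReal hP0 hPt, eLpNorm_eq_lintegral_rpow_enorm_toReal hP0 hPt,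
    ENNReal.toReal_ofReal hp0.le]
  refine ENNReal.rpow_le_rpow ?_ (one_div_pos.mpr hp0).le
  have hconv : ∀ w : (Fin N → ℝ) → ℝ, (∫⁻ x, ‖w x‖ₑ ^ p ∂μ)
      = ∫⁻ x, ENNReal.ofReal (|w x| ^ p) ∂μ := fun w => lintegral_congr fun x => by
    rw [Real.enorm_eq_ofReal_abs, ENNReal.ofReal_rpow_of_nonneg (abs_nonneg _) hp0.le]
  rw [hconv, hconv]
  refine hFat.trans ?_
  refine le_of_eq ?_
  rw [hIfpdef]
  exact ofReal_integral_eq_lintegral_ofReal hIfint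
    (Filter.Eventually.of_forall fun x => Real.rpow_nonneg (abs_nonneg _) p)
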